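/- Let 'f be the free ℚ(q)-algebra on θ_j (j ∈ J), with the twisted coproduct r as above, and define the bilinear form ⟨·,·⟩ on 'f by ⟨1,1⟩ = 1, ⟨θ_i, θ_j⟩ = δ_{ij}(1 - q^{i·i})⁻¹, ⟨x, yz⟩ = ⟨r(x), y ⊗ z⟩ (with ⟨x₁⊗x₂, y₁⊗y₂⟩ = ⟨x₁,y₁⟩⟨x₂,y₂⟩), and orthogonality of distinct weight spaces. Then this form is symmetric: ⟨x,y⟩ = ⟨y,x⟩ for all x, y ∈ 'f. -/

import Mathlib

/-- The degree (in `ℕJ`) of a word in the free monoid on `J`. -/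
noncomputable def dg {J : Type*} (w : FreeMonoid J) : J →₀ ℕ :=
  (FreeMonoid.toList w |>.map fun j => Finsupp.single j 1).sum

/-- The pairing `ℕJ × ℕJ → ℤ` induced by a symmetric bilinear form `Bf` on `ℤJ`. -/
def pairdeg {J : Type*} (Bf : J → J → ℤ) (μ ν : J →₀ ℕ) : ℤ :=
  μ.sum fun i m => ν.sum fun j m' => (m : ℤ) * (m' : ℤ) * Bf i j

/-- The twisted multiplication on `'f ⊗ 'f`, modelled on finitely supported functions on
pairs of words: `(x₁ ⊗ y₁)(x₂ ⊗ y₂) = q^{deg y₁ · deg x₂} x₁x₂ ⊗ y₁y₂`. -/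
noncomputable def tmulD {J : Type*} (Bf : J → J → ℤ)
    (d₁ d₂ : (FreeMonoid J × FreeMonoid J) →₀ RatFunc ℚ) :
    (FreeMonoid J × FreeMonoid J) →₀ RatFunc ℚ :=
  d₁.sum fun p₁ c₁ => d₂.sum fun p₂ c₂ =>
    Finsupp.single (p₁.1 * p₂.1, p₁.2 * p₂.2)
      (c₁ * c₂ * (RatFunc.X : RatFunc ℚ) ^ (pairdeg Bf (dg p₁.2) (dg p₂.1)))

namespace S19
open FreeMonoid
variable {J : Type*}

lemma dg_one : dg (1 : FreeMonoid J) = 0 := by simp [dg]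
lemma dg_of (i : J) : dg (FreeMonoid.of i) = Finsupp.single i 1 := by simp [dg]
lemma pairdeg_zero_left {Bf : J → J → ℤ} (ν : J →₀ ℕ) : pairdeg Bf 0 ν = 0 := by
  simp [pairdeg]
lemma pairdeg_zero_right {Bf : J → J → ℤ} (μ : J →₀ ℕ) : pairdeg Bf μ 0 = 0 := by
  simp [pairdeg]

lemma pairdeg_single {Bf : J → J → ℤ} (i j : J) :
    pairdeg Bf (Finsupp.single i 1) (Finsupp.single j 1) = Bf i j := by
  unfold pairdeg
  rw [Finsupp.sum_single_index (by simp), Finsupp.sum_single_index (by simp)]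
  simp

lemma dg_mass (w : FreeMonoid J) :
    (dg w).sum (fun _ n => n) = (FreeMonoid.toList w).length := by
  unfold dg
  induction FreeMonoid.toList w with
  | nil => simp
  | cons x t ih =>
      simp only [List.map_cons, List.sum_cons, List.length_cons]
      rw [Finsupp.sum_add_index' (fun _ => rfl) (fun _ _ _ => rfl), ih,
        Finsupp.sum_single_index rfl]
      omega

lemma toList_eq_nil {w : FreeMonoid J} (h : FreeMonoid.toList w = []) : w = 1 :=
  (Equiv.injective FreeMonoid.toList) (by simp [h])

lemma dg_eq_single {w : FreeMonoid J} {j : J} (h : dg w = Finsupp.single j 1) :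
    w = FreeMonoid.of j := by
  have hm := dg_mass w
  rw [h, Finsupp.sum_single_index rfl] at hm
  rcases hl : FreeMonoid.toList w with _ | ⟨x, t⟩
  · rw [hl] at hm; simp at hm
  · rw [hl] at hm
    simp at hm
    have ht : t = [] := hm
    subst ht
    have hw : w = FreeMonoid.of x := by
      apply Equiv.injective FreeMonoid.toList; simp [hl]
    subst hw
    rw [dg_of] at h
    rcases (Finsupp.single_eq_single_iff _ _ _ _).mp h with ⟨h1, _⟩ | ⟨h1, _⟩
    · rw [h1]
    · exact absurd h1 one_ne_zero

lemma cons_cases (w : FreeMonoid J) : w = 1 ∨ ∃ i v, w = FreeMonoid.of i * v := by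
  rcases h : FreeMonoid.toList w with _ | ⟨i, t⟩
  · exact Or.inl (toList_eq_nil h)
  · refine Or.inr ⟨i, FreeMonoid.ofList t, ?_⟩
    apply Equiv.injective FreeMonoid.toList
    simp [h]

lemma dg_eq_zero {w : FreeMonoid J} (h : dg w = 0) : w = 1 := by
  have hm := dg_mass w
  rw [h] at hm
  simp at hm
  exact toList_eq_nil (List.length_eq_zero_iff.mp hm.symm)

lemma dg_cons_ne_zero (i : J) (v : FreeMonoid J) : dg (FreeMonoid.of i * v) ≠ 0 := by
  intro h
  have h1 := dg_eq_zero h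
  have h2 := congrArg FreeMonoid.toList h1
  simp at h2

lemma of_mul_eq_of {i j : J} {a : FreeMonoid J} (h : FreeMonoid.of i * a = FreeMonoid.of j) :
    i = j ∧ a = 1 := by
  have := congrArg FreeMonoid.toList h
  simp only [FreeMonoid.toList_mul, FreeMonoid.toList_of] at this
  simp only [List.singleton_append, List.cons.injEq] at this
  exact ⟨this.1, toList_eq_nil this.2⟩


lemma of_mul_ne_one (i : J) (a : FreeMonoid J) : FreeMonoid.of i * a ≠ 1 := by
  intro h
  have := congrArg FreeMonoid.toList h
  simp at this

lemma tmulD_single_left (Bf : J → J → ℤ) (p : FreeMonoid J × FreeMonoid J)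
    (c : RatFunc ℚ) (d : (FreeMonoid J × FreeMonoid J) →₀ RatFunc ℚ) :
    tmulD Bf (Finsupp.single p c) d = d.sum fun p₂ c₂ =>
      Finsupp.single (p.1 * p₂.1, p.2 * p₂.2)
        (c * c₂ * (RatFunc.X : RatFunc ℚ) ^ (pairdeg Bf (dg p.2) (dg p₂.1))) := by
  unfold tmulD
  rw [Finsupp.sum_single_index]
  simp

lemma tmulD_add_left (Bf : J → J → ℤ) (d d' e : (FreeMonoid J × FreeMonoid J) →₀ RatFunc ℚ) :
    tmulD Bf (d + d') e = tmulD Bf d e + tmulD Bf d' e := by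
  unfold tmulD
  rw [Finsupp.sum_add_index']
  · intro p; simp
  · intro p c₁ c₂
    rw [← Finsupp.sum_add]
    congr 1; funext p₂ cc
    rw [add_mul, add_mul, Finsupp.single_add]

lemma exists_of_sum_single_ne_zero {d : (FreeMonoid J × FreeMonoid J) →₀ RatFunc ℚ}
    {g : FreeMonoid J × FreeMonoid J → RatFunc ℚ → FreeMonoid J × FreeMonoid J}
    {k : FreeMonoid J × FreeMonoid J → RatFunc ℚ → RatFunc ℚ}
    {q : FreeMonoid J × FreeMonoid J}
    (h : (d.sum fun p c => Finsupp.single (g p c) (k p c)) q ≠ 0) :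
    ∃ p, d p ≠ 0 ∧ g p (d p) = q ∧ k p (d p) ≠ 0 := by
  classical
  rw [Finsupp.sum_apply] at h
  obtain ⟨p, hp, hne⟩ := Finset.exists_ne_zero_of_sum_ne_zero h
  refine ⟨p, Finsupp.mem_support_iff.mp hp, ?_, ?_⟩
  · by_contra hgp
    exact hne (Finsupp.single_eq_of_ne' hgp)
  · intro hk
    exact hne (by simp only; rw [hk]; simp)

section WithR

variable {Bf : J → J → ℤ}
variable {r : MonoidAlgebra (RatFunc ℚ) (FreeMonoid J) →ₗ[RatFunc ℚ]
      ((FreeMonoid J × FreeMonoid J) →₀ RatFunc ℚ)}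

lemma r_cons
    (hrθ : ∀ j : J, r (MonoidAlgebra.single (FreeMonoid.of j) 1) =
      Finsupp.single (FreeMonoid.of j, 1) 1 + Finsupp.single (1, FreeMonoid.of j) 1)
    (hrm : ∀ x y, r (x * y) = tmulD Bf (r x) (r y))
    (i : J) (v : FreeMonoid J) :
    r (MonoidAlgebra.single (FreeMonoid.of i * v) 1) =
      ((r (MonoidAlgebra.single v 1)).sum fun p c =>
        Finsupp.single (FreeMonoid.of i * p.1, p.2) c)
      + ((r (MonoidAlgebra.single v 1)).sum fun p c =>
        Finsupp.single (p.1, FreeMonoid.of i * p.2)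
          (c * (RatFunc.X : RatFunc ℚ) ^ (pairdeg Bf (Finsupp.single i 1) (dg p.1)))) := by
  have h1 : MonoidAlgebra.single (FreeMonoid.of i * v) (1 : RatFunc ℚ)
      = MonoidAlgebra.single (FreeMonoid.of i) 1 * MonoidAlgebra.single v 1 := by
    rw [MonoidAlgebra.single_mul_single, one_mul]
  rw [h1, hrm, hrθ, tmulD_add_left, tmulD_single_left, tmulD_single_left]
  congr 1
  · apply Finsupp.sum_congr
    intro p _
    simp [dg_one, pairdeg_zero_left]
  · apply Finsupp.sum_congr
    intro p _
    simp [dg_of]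

lemma r_len
    (hr1 : r 1 = Finsupp.single 1 1)
    (hrθ : ∀ j : J, r (MonoidAlgebra.single (FreeMonoid.of j) 1) =
      Finsupp.single (FreeMonoid.of j, 1) 1 + Finsupp.single (1, FreeMonoid.of j) 1)
    (hrm : ∀ x y, r (x * y) = tmulD Bf (r x) (r y))
    (v : FreeMonoid J) :
    ∀ p : FreeMonoid J × FreeMonoid J, r (MonoidAlgebra.single v 1) p ≠ 0 →
      (FreeMonoid.toList p.1).length + (FreeMonoid.toList p.2).length
        = (FreeMonoid.toList v).length := by
  classical
  induction v using FreeMonoid.recOn with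
  | one =>
      intro p hp
      rw [← MonoidAlgebra.one_def, hr1] at hp
      by_cases h : (1 : FreeMonoid J × FreeMonoid J) = p
      · rw [← h]; simp
      · rw [Finsupp.single_eq_of_ne' h] at hp; exact absurd rfl hp
  | of_mul i v ihv =>
      intro p hp
      rw [r_cons hrθ hrm] at hp
      rw [Finsupp.add_apply] at hp
      have : ((r (MonoidAlgebra.single v 1)).sum fun p c =>
          Finsupp.single (FreeMonoid.of i * p.1, p.2) c) p ≠ 0 ∨
          ((r (MonoidAlgebra.single v 1)).sum fun p c =>
          Finsupp.single (p.1, FreeMonoid.of i * p.2)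
            (c * (RatFunc.X : RatFunc ℚ) ^ (pairdeg Bf (Finsupp.single i 1) (dg p.1)))) p ≠ 0 := by
        by_contra hc
        push_neg at hc
        rw [hc.1, hc.2] at hp
        exact hp (by ring)
      rcases this with h | h
      · obtain ⟨p', hne, hgp, -⟩ := exists_of_sum_single_ne_zero h
        have hl := ihv p' hne
        rw [← hgp]
        simp only [FreeMonoid.toList_mul, FreeMonoid.toList_of, List.length_append,
          List.length_cons, List.length_nil]
        omega
      · obtain ⟨p', hne, hgp, -⟩ := exists_of_sum_single_ne_zero h
        have hl := ihv p' hne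
        rw [← hgp]
        simp only [FreeMonoid.toList_mul, FreeMonoid.toList_of, List.length_append,
          List.length_cons, List.length_nil]
        omega

lemma r_counit
    (hr1 : r 1 = Finsupp.single 1 1)
    (hrθ : ∀ j : J, r (MonoidAlgebra.single (FreeMonoid.of j) 1) =
      Finsupp.single (FreeMonoid.of j, 1) 1 + Finsupp.single (1, FreeMonoid.of j) 1)
    (hrm : ∀ x y, r (x * y) = tmulD Bf (r x) (r y))
    (v : FreeMonoid J) :
    ∃ D : (FreeMonoid J × FreeMonoid J) →₀ RatFunc ℚ,
      r (MonoidAlgebra.single v 1) = Finsupp.single ((1 : FreeMonoid J), v) 1 + D ∧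
      ∀ b, D ((1 : FreeMonoid J), b) = 0 := by
  classical
  induction v using FreeMonoid.recOn with
  | one =>
      refine ⟨0, ?_, fun b => rfl⟩
      rw [← MonoidAlgebra.one_def, hr1, add_zero]
      rfl
  | of_mul i v ihv =>
      obtain ⟨D, hD, hD0⟩ := ihv
      refine ⟨Finsupp.single (FreeMonoid.of i, v) 1
        + (D.sum fun p c => Finsupp.single (FreeMonoid.of i * p.1, p.2) c)
        + (D.sum fun p c => Finsupp.single (p.1, FreeMonoid.of i * p.2)
            (c * (RatFunc.X : RatFunc ℚ) ^ (pairdeg Bf (Finsupp.single i 1) (dg p.1)))),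
        ?_, ?_⟩
      · rw [r_cons hrθ hrm, hD]
        have e1 : ((Finsupp.single ((1 : FreeMonoid J), v) (1 : RatFunc ℚ)) + D).sum
              (fun p c => Finsupp.single (FreeMonoid.of i * p.1, p.2) c)
            = Finsupp.single (FreeMonoid.of i * 1, v) (1 : RatFunc ℚ)
              + D.sum (fun p c => Finsupp.single (FreeMonoid.of i * p.1, p.2) c) := by
          rw [Finsupp.sum_add_index' (fun a => by simp)
            (fun a b c => by rw [Finsupp.single_add]),
            Finsupp.sum_single_index (by simp)]
        have e2 : ((Finsupp.single ((1 : FreeMonoid J), v) (1 : RatFunc ℚ)) + D).sum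
              (fun p c => Finsupp.single (p.1, FreeMonoid.of i * p.2)
                (c * (RatFunc.X : RatFunc ℚ) ^ (pairdeg Bf (Finsupp.single i 1) (dg p.1))))
            = Finsupp.single ((1 : FreeMonoid J), FreeMonoid.of i * v)
                ((1 : RatFunc ℚ) * (RatFunc.X : RatFunc ℚ)
                  ^ (pairdeg Bf (Finsupp.single i 1) (dg (1 : FreeMonoid J))))
              + D.sum (fun p c => Finsupp.single (p.1, FreeMonoid.of i * p.2)
                (c * (RatFunc.X : RatFunc ℚ)
                  ^ (pairdeg Bf (Finsupp.single i 1) (dg p.1)))) := by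
          rw [Finsupp.sum_add_index' (fun a => by simp)
            (fun a b c => by rw [add_mul, Finsupp.single_add]),
            Finsupp.sum_single_index (by simp)]
        rw [e1, e2]
        rw [mul_one, dg_one, pairdeg_zero_right, zpow_zero, mul_one]
        abel
      · intro b
        have hof : (FreeMonoid.of i : FreeMonoid J) ≠ 1 := by
          intro h; have := congrArg FreeMonoid.toList h; simp at this
        simp only [Finsupp.add_apply]
        have h1 : (Finsupp.single (FreeMonoid.of i, v) (1 : RatFunc ℚ)) (1, b) = 0 :=
          Finsupp.single_eq_of_ne' (by intro h; exact hof (congrArg Prod.fst h))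
        have h2 : (D.sum fun p c =>
            Finsupp.single (FreeMonoid.of i * p.1, p.2) c) (1, b) = 0 := by
          rw [Finsupp.sum_apply]
          apply Finset.sum_eq_zero
          intro p hp
          exact Finsupp.single_eq_of_ne'
            (fun h => of_mul_ne_one i p.1 (congrArg Prod.fst h))
        have h3 : (D.sum fun p c => Finsupp.single (p.1, FreeMonoid.of i * p.2)
            (c * (RatFunc.X : RatFunc ℚ) ^ (pairdeg Bf (Finsupp.single i 1) (dg p.1)))) (1, b)
            = 0 := by
          rw [Finsupp.sum_apply]
          apply Finset.sum_eq_zero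
          intro p hp
          by_cases hp1 : p.1 = 1
          · exfalso
            have hDp : D p ≠ 0 := Finsupp.mem_support_iff.mp hp
            apply hDp
            have : p = (1, p.2) := by rw [← hp1]
            rw [this]
            exact hD0 p.2
          · exact Finsupp.single_eq_of_ne' (fun h => hp1 (congrArg Prod.fst h))
        rw [h1, h2, h3]
        ring

end WithR
end S19

namespace S19B
open FreeMonoid S19
variable {J : Type*} [DecidableEq J]
variable {Bf : J → J → ℤ}
variable {β : MonoidAlgebra (RatFunc ℚ) (FreeMonoid J) →ₗ[RatFunc ℚ]
      MonoidAlgebra (RatFunc ℚ) (FreeMonoid J) →ₗ[RatFunc ℚ] RatFunc ℚ}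

open Classical in
lemma beta_theta
    (hβθ : ∀ i j : J,
      β (MonoidAlgebra.single (FreeMonoid.of i) 1)
        (MonoidAlgebra.single (FreeMonoid.of j) 1) =
      if i = j then (1 - (RatFunc.X : RatFunc ℚ) ^ (Bf i i))⁻¹ else 0)
    (horth : ∀ w w' : FreeMonoid J, dg w ≠ dg w' →
      β (MonoidAlgebra.single w 1) (MonoidAlgebra.single w' 1) = 0)
    (a : FreeMonoid J) (j : J) :
    β (MonoidAlgebra.single a 1) (MonoidAlgebra.single (FreeMonoid.of j) 1) =
      if a = FreeMonoid.of j then (1 - (RatFunc.X : RatFunc ℚ) ^ (Bf j j))⁻¹ else 0 := by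
  by_cases ha : a = FreeMonoid.of j
  · subst ha
    rw [if_pos rfl]
    have := hβθ j j
    rw [if_pos rfl] at this
    exact this
  · rw [if_neg ha]
    apply horth
    rw [dg_of]
    intro hdg
    exact ha (dg_eq_single hdg)

open Classical in
lemma expand_right
    {r : MonoidAlgebra (RatFunc ℚ) (FreeMonoid J) →ₗ[RatFunc ℚ]
      ((FreeMonoid J × FreeMonoid J) →₀ RatFunc ℚ)}
    (hβθ : ∀ i j : J,
      β (MonoidAlgebra.single (FreeMonoid.of i) 1)
        (MonoidAlgebra.single (FreeMonoid.of j) 1) =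
      if i = j then (1 - (RatFunc.X : RatFunc ℚ) ^ (Bf i i))⁻¹ else 0)
    (horth : ∀ w w' : FreeMonoid J, dg w ≠ dg w' →
      β (MonoidAlgebra.single w 1) (MonoidAlgebra.single w' 1) = 0)
    (hcoprod : ∀ x y z, β x (y * z) =
      (r x).sum fun p c => c *
        (β (MonoidAlgebra.single p.1 1) y * β (MonoidAlgebra.single p.2 1) z))
    (w u : FreeMonoid J) (j : J) :
    β (MonoidAlgebra.single w 1) (MonoidAlgebra.single (FreeMonoid.of j * u) 1) =
      (r (MonoidAlgebra.single w 1)).sum fun p c => c *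
        ((if p.1 = FreeMonoid.of j then (1 - (RatFunc.X : RatFunc ℚ) ^ (Bf j j))⁻¹ else 0)
          * β (MonoidAlgebra.single p.2 1) (MonoidAlgebra.single u 1)) := by
  have h1 : MonoidAlgebra.single (FreeMonoid.of j * u) (1 : RatFunc ℚ)
      = MonoidAlgebra.single (FreeMonoid.of j) 1 * MonoidAlgebra.single u 1 := by
    rw [MonoidAlgebra.single_mul_single, one_mul]
  rw [h1, hcoprod]
  apply Finsupp.sum_congr
  intro p _
  rw [beta_theta hβθ horth]

lemma sum_single_comp {ι κ : Type*} (d : ι →₀ RatFunc ℚ) (g : ι → κ)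
    (k : ι → RatFunc ℚ → RatFunc ℚ) (f : κ → RatFunc ℚ → RatFunc ℚ)
    (hf0 : ∀ a, f a 0 = 0) (hfadd : ∀ a b₁ b₂, f a (b₁ + b₂) = f a b₁ + f a b₂) :
    ((d.sum fun p c => Finsupp.single (g p) (k p c)).sum f)
      = d.sum fun p c => f (g p) (k p c) := by
  rw [Finsupp.sum_sum_index hf0 hfadd]
  exact Finsupp.sum_congr fun p _ => Finsupp.sum_single_index (hf0 _)

open Classical in
lemma expand_cons
    {r : MonoidAlgebra (RatFunc ℚ) (FreeMonoid J) →ₗ[RatFunc ℚ]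
      ((FreeMonoid J × FreeMonoid J) →₀ RatFunc ℚ)}
    (hr1 : r 1 = Finsupp.single 1 1)
    (hrθ : ∀ j : J, r (MonoidAlgebra.single (FreeMonoid.of j) 1) =
      Finsupp.single (FreeMonoid.of j, 1) 1 + Finsupp.single (1, FreeMonoid.of j) 1)
    (hrm : ∀ x y, r (x * y) = tmulD Bf (r x) (r y))
    (i : J) (v : FreeMonoid J) (j : J) (F : FreeMonoid J → RatFunc ℚ) :
    ((r (MonoidAlgebra.single (FreeMonoid.of i * v) 1)).sum fun p c => c *
        ((if p.1 = FreeMonoid.of j then (1 - (RatFunc.X : RatFunc ℚ) ^ (Bf j j))⁻¹ else 0)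
          * F p.2))
    = (if i = j then (1 - (RatFunc.X : RatFunc ℚ) ^ (Bf j j))⁻¹ * F v else 0)
      + ((r (MonoidAlgebra.single v 1)).sum fun p c =>
          if p.1 = FreeMonoid.of j then
            c * ((RatFunc.X : RatFunc ℚ) ^ (Bf i j)) *
              ((1 - (RatFunc.X : RatFunc ℚ) ^ (Bf j j))⁻¹ * F (FreeMonoid.of i * p.2))
          else 0) := by
  have hf0 : ∀ a : FreeMonoid J × FreeMonoid J, (fun (p : FreeMonoid J × FreeMonoid J) c => c *
      ((if p.1 = FreeMonoid.of j then (1 - (RatFunc.X : RatFunc ℚ) ^ (Bf j j))⁻¹ else 0)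
        * F p.2)) a 0 = 0 := fun a => zero_mul _
  have hfadd : ∀ (a : FreeMonoid J × FreeMonoid J) (b₁ b₂ : RatFunc ℚ),
      (fun (p : FreeMonoid J × FreeMonoid J) c => c *
      ((if p.1 = FreeMonoid.of j then (1 - (RatFunc.X : RatFunc ℚ) ^ (Bf j j))⁻¹ else 0)
        * F p.2)) a (b₁ + b₂) = _ + _ := fun a b₁ b₂ => add_mul _ _ _
  rw [r_cons hrθ hrm, Finsupp.sum_add_index' hf0 hfadd,
    sum_single_comp _ (fun p : FreeMonoid J × FreeMonoid J => (FreeMonoid.of i * p.1, p.2))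
      (fun _ c => c) _ hf0 hfadd,
    sum_single_comp _ (fun p : FreeMonoid J × FreeMonoid J => (p.1, FreeMonoid.of i * p.2))
      (fun p c => c * (RatFunc.X : RatFunc ℚ) ^ (pairdeg Bf (Finsupp.single i 1) (dg p.1)))
      _ hf0 hfadd]
  congr 1
  · -- S1 part
    obtain ⟨D, hD, hD0⟩ := r_counit hr1 hrθ hrm v
    rw [hD, Finsupp.sum_add_index' (by intro a; simp) (by intro a b₁ b₂; ring),
      Finsupp.sum_single_index (by simp)]
    have hDz : (D.sum fun p c => c *
        ((if (FreeMonoid.of i * p.1, p.2).1 = FreeMonoid.of j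
          then (1 - (RatFunc.X : RatFunc ℚ) ^ (Bf j j))⁻¹ else 0)
          * F (FreeMonoid.of i * p.1, p.2).2)) = 0 := by
      have hz : (D.sum fun p c => c *
          ((if (FreeMonoid.of i * p.1, p.2).1 = FreeMonoid.of j
            then (1 - (RatFunc.X : RatFunc ℚ) ^ (Bf j j))⁻¹ else 0)
            * F (FreeMonoid.of i * p.1, p.2).2))
          = D.sum (fun _ _ => (0 : RatFunc ℚ)) := by
        apply Finsupp.sum_congr
        intro p hp
        simp only
        by_cases hp1 : FreeMonoid.of i * p.1 = FreeMonoid.of j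
        · exfalso
          obtain ⟨-, h1⟩ := of_mul_eq_of hp1
          have hDp : D p ≠ 0 := Finsupp.mem_support_iff.mp hp
          apply hDp
          have : p = (1, p.2) := by rw [← h1]
          rw [this]
          exact hD0 p.2
        · rw [if_neg hp1, zero_mul, mul_zero]
      rw [hz]; exact Finset.sum_const_zero
    rw [hDz, add_zero]
    simp only [mul_one]
    by_cases hij : i = j
    · subst hij
      rw [if_pos rfl, if_pos rfl, one_mul]
    · rw [if_neg hij, if_neg (fun h => hij (FreeMonoid.of_injective h)), zero_mul, mul_zero]
  · -- S2 part
    apply Finsupp.sum_congr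
    intro p _
    simp only
    by_cases hp : p.1 = FreeMonoid.of j
    · rw [if_pos hp, if_pos hp, hp, dg_of, pairdeg_single]
    · rw [if_neg hp, if_neg hp, zero_mul, mul_zero]

open Classical in
lemma sym_single
    {r : MonoidAlgebra (RatFunc ℚ) (FreeMonoid J) →ₗ[RatFunc ℚ]
      ((FreeMonoid J × FreeMonoid J) →₀ RatFunc ℚ)}
    (hBf : ∀ i j, Bf i j = Bf j i)
    (hr1 : r 1 = Finsupp.single 1 1)
    (hrθ : ∀ j : J, r (MonoidAlgebra.single (FreeMonoid.of j) 1) =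
      Finsupp.single (FreeMonoid.of j, 1) 1 + Finsupp.single (1, FreeMonoid.of j) 1)
    (hrm : ∀ x y, r (x * y) = tmulD Bf (r x) (r y))
    (hβθ : ∀ i j : J,
      β (MonoidAlgebra.single (FreeMonoid.of i) 1)
        (MonoidAlgebra.single (FreeMonoid.of j) 1) =
      if i = j then (1 - (RatFunc.X : RatFunc ℚ) ^ (Bf i i))⁻¹ else 0)
    (horth : ∀ w w' : FreeMonoid J, dg w ≠ dg w' →
      β (MonoidAlgebra.single w 1) (MonoidAlgebra.single w' 1) = 0)
    (hcoprod : ∀ x y z, β x (y * z) =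
      (r x).sum fun p c => c *
        (β (MonoidAlgebra.single p.1 1) y * β (MonoidAlgebra.single p.2 1) z)) :
    ∀ n : ℕ, ∀ w w' : FreeMonoid J,
      (FreeMonoid.toList w).length + (FreeMonoid.toList w').length ≤ n →
      β (MonoidAlgebra.single w 1) (MonoidAlgebra.single w' 1)
        = β (MonoidAlgebra.single w' 1) (MonoidAlgebra.single w 1) := by
  intro n
  induction n with
  | zero =>
      intro w w' h
      have hw : w = 1 := toList_eq_nil (List.length_eq_zero_iff.mp (by omega))
      have hw' : w' = 1 := toList_eq_nil (List.length_eq_zero_iff.mp (by omega))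
      subst hw; subst hw'; rfl
  | succ n ih =>
      intro w w' hlen
      rcases cons_cases w with hw | ⟨i, v, hw⟩
      · subst hw
        rcases cons_cases w' with hw' | ⟨j, u, hw'⟩
        · subst hw'; rfl
        · subst hw'
          have h1 : dg (1 : FreeMonoid J) ≠ dg (FreeMonoid.of j * u) := by
            rw [dg_one]
            exact fun h => dg_cons_ne_zero j u h.symm
          rw [horth _ _ h1, horth _ _ (Ne.symm h1)]
      · rcases cons_cases w' with hw' | ⟨j, u, hw'⟩
        · subst hw; subst hw'
          have h1 : dg (1 : FreeMonoid J) ≠ dg (FreeMonoid.of i * v) := by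
            rw [dg_one]
            exact fun h => dg_cons_ne_zero i v h.symm
          rw [horth _ _ h1, horth _ _ (Ne.symm h1)]
        · subst hw; subst hw'
          -- main case
          have hlv : (FreeMonoid.toList (FreeMonoid.of i * v)).length
              = (FreeMonoid.toList v).length + 1 := by simp
          have hlu : (FreeMonoid.toList (FreeMonoid.of j * u)).length
              = (FreeMonoid.toList u).length + 1 := by simp
          have hvu : (FreeMonoid.toList v).length + (FreeMonoid.toList u).length + 1 ≤ n := by
            omega
          rw [expand_right hβθ horth hcoprod (FreeMonoid.of i * v) u j,
            expand_cons hr1 hrθ hrm i v j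
              (fun m => β (MonoidAlgebra.single m 1) (MonoidAlgebra.single u 1)),
            expand_right hβθ horth hcoprod (FreeMonoid.of j * u) v i,
            expand_cons hr1 hrθ hrm j u i
              (fun m => β (MonoidAlgebra.single m 1) (MonoidAlgebra.single v 1))]
          congr 1
          · -- diagonal part
            by_cases hij : i = j
            · subst hij
              rw [if_pos rfl, if_pos rfl, ih v u (by omega)]
            · rw [if_neg hij, if_neg (Ne.symm hij)]
          · -- cross part
            calc ((r (MonoidAlgebra.single v 1)).sum fun p c =>
                  if p.1 = FreeMonoid.of j then
                    c * ((RatFunc.X : RatFunc ℚ) ^ (Bf i j)) *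
                      ((1 - (RatFunc.X : RatFunc ℚ) ^ (Bf j j))⁻¹ *
                        β (MonoidAlgebra.single (FreeMonoid.of i * p.2) 1)
                          (MonoidAlgebra.single u 1))
                  else 0)
                = (r (MonoidAlgebra.single v 1)).sum fun p c =>
                    (r (MonoidAlgebra.single u 1)).sum fun p' c' =>
                      if p.1 = FreeMonoid.of j ∧ p'.1 = FreeMonoid.of i then
                        c * c' * ((RatFunc.X : RatFunc ℚ) ^ (Bf i j)) *
                          ((1 - (RatFunc.X : RatFunc ℚ) ^ (Bf i i))⁻¹ *
                            ((1 - (RatFunc.X : RatFunc ℚ) ^ (Bf j j))⁻¹ *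
                              β (MonoidAlgebra.single p'.2 1) (MonoidAlgebra.single p.2 1)))
                      else 0 := by
                  apply Finsupp.sum_congr
                  intro p hp
                  by_cases hp1 : p.1 = FreeMonoid.of j
                  · have hplen := r_len hr1 hrθ hrm v p (Finsupp.mem_support_iff.mp hp)
                    have hp1len : (FreeMonoid.toList p.1).length = 1 := by
                      rw [hp1]; simp
                    have hihlen : (FreeMonoid.toList (FreeMonoid.of i * p.2)).length
                        + (FreeMonoid.toList u).length ≤ n := by
                      simp only [FreeMonoid.toList_mul, FreeMonoid.toList_of,
                        List.length_append, List.length_cons, List.length_nil]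
                      omega
                    rw [if_pos hp1, ih _ _ hihlen,
                      expand_right hβθ horth hcoprod u p.2 i,
                      Finsupp.mul_sum, Finsupp.mul_sum]
                    apply Finsupp.sum_congr
                    intro p' hp'
                    by_cases hp'1 : p'.1 = FreeMonoid.of i
                    · rw [if_pos hp'1, if_pos ⟨hp1, hp'1⟩]
                      ring
                    · rw [if_neg hp'1, if_neg (fun hc => hp'1 hc.2)]
                      ring
                  · rw [if_neg hp1]
                    have : ((r (MonoidAlgebra.single u 1)).sum fun p' c' =>
                        if p.1 = FreeMonoid.of j ∧ p'.1 = FreeMonoid.of i then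
                          (r (MonoidAlgebra.single v 1)) p * c' *
                            ((RatFunc.X : RatFunc ℚ) ^ (Bf i j)) *
                            ((1 - (RatFunc.X : RatFunc ℚ) ^ (Bf i i))⁻¹ *
                              ((1 - (RatFunc.X : RatFunc ℚ) ^ (Bf j j))⁻¹ *
                                β (MonoidAlgebra.single p'.2 1)
                                  (MonoidAlgebra.single p.2 1)))
                        else 0)
                        = (r (MonoidAlgebra.single u 1)).sum fun _ _ => (0 : RatFunc ℚ) := by
                      apply Finsupp.sum_congr
                      intro p' _
                      rw [if_neg (fun hc => hp1 hc.1)]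
                    rw [this]; exact Finset.sum_const_zero.symm
              _ = (r (MonoidAlgebra.single u 1)).sum fun p' c' =>
                    (r (MonoidAlgebra.single v 1)).sum fun p c =>
                      if p.1 = FreeMonoid.of j ∧ p'.1 = FreeMonoid.of i then
                        c * c' * ((RatFunc.X : RatFunc ℚ) ^ (Bf i j)) *
                          ((1 - (RatFunc.X : RatFunc ℚ) ^ (Bf i i))⁻¹ *
                            ((1 - (RatFunc.X : RatFunc ℚ) ^ (Bf j j))⁻¹ *
                              β (MonoidAlgebra.single p'.2 1) (MonoidAlgebra.single p.2 1)))
                      else 0 := Finsupp.sum_comm _ _ _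
              _ = (r (MonoidAlgebra.single u 1)).sum fun p c =>
                    if p.1 = FreeMonoid.of i then
                      c * ((RatFunc.X : RatFunc ℚ) ^ (Bf j i)) *
                        ((1 - (RatFunc.X : RatFunc ℚ) ^ (Bf i i))⁻¹ *
                          β (MonoidAlgebra.single (FreeMonoid.of j * p.2) 1)
                            (MonoidAlgebra.single v 1))
                    else 0 := by
                  apply Finsupp.sum_congr
                  intro p' hp'
                  by_cases hp'1 : p'.1 = FreeMonoid.of i
                  · have hp'len := r_len hr1 hrθ hrm u p' (Finsupp.mem_support_iff.mp hp')
                    have hp'1len : (FreeMonoid.toList p'.1).length = 1 := by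
                      rw [hp'1]; simp
                    have hihlen : (FreeMonoid.toList (FreeMonoid.of j * p'.2)).length
                        + (FreeMonoid.toList v).length ≤ n := by
                      simp only [FreeMonoid.toList_mul, FreeMonoid.toList_of,
                        List.length_append, List.length_cons, List.length_nil]
                      omega
                    rw [if_pos hp'1, ih _ _ hihlen,
                      expand_right hβθ horth hcoprod v p'.2 j,
                      Finsupp.mul_sum, Finsupp.mul_sum]
                    apply Finsupp.sum_congr
                    intro p hp
                    by_cases hp1 : p.1 = FreeMonoid.of j
                    · rw [if_pos hp1, if_pos ⟨hp1, hp'1⟩]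
                      have hplen := r_len hr1 hrθ hrm v p (Finsupp.mem_support_iff.mp hp)
                      have hp1len : (FreeMonoid.toList p.1).length = 1 := by
                        rw [hp1]; simp
                      have hsym : β (MonoidAlgebra.single p'.2 1) (MonoidAlgebra.single p.2 1)
                          = β (MonoidAlgebra.single p.2 1) (MonoidAlgebra.single p'.2 1) := by
                        apply ih
                        omega
                      rw [hsym, hBf i j]
                      ring
                    · rw [if_neg hp1, if_neg (fun hc => hp1 hc.1)]
                      ring
                  · rw [if_neg hp'1]
                    have : ((r (MonoidAlgebra.single v 1)).sum fun p c =>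
                        if p.1 = FreeMonoid.of j ∧ p'.1 = FreeMonoid.of i then
                          c * (r (MonoidAlgebra.single u 1)) p' *
                            ((RatFunc.X : RatFunc ℚ) ^ (Bf i j)) *
                            ((1 - (RatFunc.X : RatFunc ℚ) ^ (Bf i i))⁻¹ *
                              ((1 - (RatFunc.X : RatFunc ℚ) ^ (Bf j j))⁻¹ *
                                β (MonoidAlgebra.single p'.2 1)
                                  (MonoidAlgebra.single p.2 1)))
                        else 0)
                        = (r (MonoidAlgebra.single v 1)).sum fun _ _ => (0 : RatFunc ℚ) := by
                      apply Finsupp.sum_congr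
                      intro p _
                      rw [if_neg (fun hc => hp'1 hc.2)]
                    rw [this]; exact Finset.sum_const_zero

end S19B

/-- Lusztig's bilinear form on the free algebra `'f` (modelled as the monoid algebra of
the free monoid on `J` over `ℚ(q)`) — characterised by `⟨1,1⟩ = 1`,
`⟨θ_i, θ_j⟩ = δ_{ij} (1 - q^{i·i})⁻¹`, orthogonality of distinct weight spaces, and
`⟨x, yz⟩ = ⟨r(x), y ⊗ z⟩` for the twisted coproduct `r` — is symmetric. -/
theorem stmt_19 (J : Type*) [DecidableEq J] (Bf : J → J → ℤ)
    (hBf : ∀ i j, Bf i j = Bf j i)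
    (r : MonoidAlgebra (RatFunc ℚ) (FreeMonoid J) →ₗ[RatFunc ℚ]
      ((FreeMonoid J × FreeMonoid J) →₀ RatFunc ℚ))
    (hr1 : r 1 = Finsupp.single 1 1)
    (hrθ : ∀ j : J, r (MonoidAlgebra.single (FreeMonoid.of j) 1) =
      Finsupp.single (FreeMonoid.of j, 1) 1 + Finsupp.single (1, FreeMonoid.of j) 1)
    (hrm : ∀ x y, r (x * y) = tmulD Bf (r x) (r y))
    (β : MonoidAlgebra (RatFunc ℚ) (FreeMonoid J) →ₗ[RatFunc ℚ]
      MonoidAlgebra (RatFunc ℚ) (FreeMonoid J) →ₗ[RatFunc ℚ] RatFunc ℚ)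
    (hβ1 : β 1 1 = 1)
    (hβθ : ∀ i j : J,
      β (MonoidAlgebra.single (FreeMonoid.of i) 1)
        (MonoidAlgebra.single (FreeMonoid.of j) 1) =
      if i = j then (1 - (RatFunc.X : RatFunc ℚ) ^ (Bf i i))⁻¹ else 0)
    (horth : ∀ w w' : FreeMonoid J, dg w ≠ dg w' →
      β (MonoidAlgebra.single w 1) (MonoidAlgebra.single w' 1) = 0)
    (hcoprod : ∀ x y z, β x (y * z) =
      (r x).sum fun p c => c *
        (β (MonoidAlgebra.single p.1 1) y * β (MonoidAlgebra.single p.2 1) z)) :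
    ∀ x y, β x y = β y x := by
  intro x y
  induction x using MonoidAlgebra.induction_linear with
  | zero => simp
  | add f g hf hg => simp [map_add, hf, hg]
  | single a b =>
      induction y using MonoidAlgebra.induction_linear with
      | zero => simp
      | add f g hf hg => simp [map_add, hf, hg]
      | single a' b' =>
          have h1 : (MonoidAlgebra.single a b : MonoidAlgebra (RatFunc ℚ) (FreeMonoid J))
              = b • MonoidAlgebra.single a 1 := by
            rw [MonoidAlgebra.smul_single', mul_one]
          have h2 : (MonoidAlgebra.single a' b' : MonoidAlgebra (RatFunc ℚ) (FreeMonoid J))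
              = b' • MonoidAlgebra.single a' 1 := by
            rw [MonoidAlgebra.smul_single', mul_one]
          rw [h1, h2]
          set_option synthInstance.maxHeartbeats 1000000 in
          simp only [map_smul, LinearMap.smul_apply, smul_eq_mul]
          rw [S19B.sym_single hBf hr1 hrθ hrm hβθ horth hcoprod
              ((FreeMonoid.toList a).length + (FreeMonoid.toList a').length) a a' le_rfl]
          ring
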